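/- The fourth derivative of the effective potential at ȳ satisfies (1/6) V⁗(ȳ) = (q μ₀/(2π m²)) I₀² ((1+k)⁴/(d⁴ k²)) · [ (q μ₀/(4π))(1+k)² − p_z (1+k³)/(k I₀) ]. -/

import Mathlib

open Real Topology Filter

private lemma log_sub_hasDeriv (d y : ℝ) (hyd : y - d ≠ 0) :
    HasDerivAt (fun x : ℝ => Real.log (x - d)) (y - d)⁻¹ y := by
  simpa using ((hasDerivAt_id y).sub_const d).log hyd

private lemma inv_hasDeriv (y : ℝ) (hy : y ≠ 0) :
    HasDerivAt (fun x : ℝ => x⁻¹) (-(y⁻¹ ^ 2)) y := by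
  simpa [inv_pow] using hasDerivAt_inv hy

private lemma inv_sub_hasDeriv (d y : ℝ) (hyd : y - d ≠ 0) :
    HasDerivAt (fun x : ℝ => (x - d)⁻¹) (-((y - d)⁻¹ ^ 2)) y := by
  have h := ((hasDerivAt_id y).sub_const d).inv hyd
  refine h.congr_deriv ?_
  simp only [id]
  field_simp

private lemma G_hasDeriv (μ₀ d I₀ k q p_z B y : ℝ) (hy : y ≠ 0) (hyd : y - d ≠ 0) :
    HasDerivAt
      (fun x : ℝ => p_z - q * (-(μ₀ / (2 * π)) * (I₀ * Real.log x + k * I₀ * Real.log (x - d)) - B))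
      (q * (μ₀ / (2 * π)) * I₀ * (y⁻¹ + k * (y - d)⁻¹)) y := by
  have h1 := Real.hasDerivAt_log hy
  have h2 := log_sub_hasDeriv d y hyd
  have h3 := ((((h1.const_mul I₀).add (h2.const_mul (k * I₀))).const_mul
      (-(μ₀ / (2 * π)))).sub_const B).const_mul q
  have h4 := h3.const_sub p_z
  refine h4.congr_deriv ?_
  ring

noncomputable def DD1 (m a k d : ℝ) (G : ℝ → ℝ) : ℝ → ℝ := fun y =>
  (1 / m ^ 2) * (a * (G y * (y⁻¹ + k * (y - d)⁻¹)))

noncomputable def DD2 (m a k d : ℝ) (G : ℝ → ℝ) : ℝ → ℝ := fun y =>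
  (1 / m ^ 2) * (a ^ 2 * (y⁻¹ + k * (y - d)⁻¹) ^ 2
    + a * G y * (-(y⁻¹ ^ 2) - k * (y - d)⁻¹ ^ 2))

noncomputable def DD3 (m a k d : ℝ) (G : ℝ → ℝ) : ℝ → ℝ := fun y =>
  (1 / m ^ 2) * (3 * a ^ 2 * (y⁻¹ + k * (y - d)⁻¹) * (-(y⁻¹ ^ 2) - k * (y - d)⁻¹ ^ 2)
    + a * G y * (2 * y⁻¹ ^ 3 + 2 * k * (y - d)⁻¹ ^ 3))

noncomputable def DD4 (m a k d : ℝ) (G : ℝ → ℝ) : ℝ → ℝ := fun y =>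
  (1 / m ^ 2) * (3 * a ^ 2 * (-(y⁻¹ ^ 2) - k * (y - d)⁻¹ ^ 2) ^ 2
    + 4 * a ^ 2 * (y⁻¹ + k * (y - d)⁻¹) * (2 * y⁻¹ ^ 3 + 2 * k * (y - d)⁻¹ ^ 3)
    + a * G y * (-(6 * y⁻¹ ^ 4) - 6 * k * (y - d)⁻¹ ^ 4))

private lemma step1 (m a k d : ℝ) (G : ℝ → ℝ) (y : ℝ)
    (hG : HasDerivAt G (a * (y⁻¹ + k * (y - d)⁻¹)) y) :
    HasDerivAt (fun x => (1 / (2 * m ^ 2)) * G x ^ 2) (DD1 m a k d G y) y := by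
  unfold DD1
  have h := (hG.pow 2).const_mul (1 / (2 * m ^ 2))
  refine h.congr_deriv ?_
  ring

private lemma step2 (m a k d : ℝ) (G : ℝ → ℝ) (y : ℝ) (hy : y ≠ 0) (hyd : y - d ≠ 0)
    (hG : HasDerivAt G (a * (y⁻¹ + k * (y - d)⁻¹)) y) :
    HasDerivAt (DD1 m a k d G) (DD2 m a k d G y) y := by
  unfold DD1 DD2
  have hsum := (inv_hasDeriv y hy).add ((inv_sub_hasDeriv d y hyd).const_mul k)
  have h := ((hG.mul hsum).const_mul a).const_mul (1 / m ^ 2)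
  refine h.congr_deriv ?_
  simp only [Pi.add_apply, Pi.sub_apply, Pi.neg_apply, Pi.pow_apply, Pi.mul_apply]
  ring

private lemma step3 (m a k d : ℝ) (G : ℝ → ℝ) (y : ℝ) (hy : y ≠ 0) (hyd : y - d ≠ 0)
    (hG : HasDerivAt G (a * (y⁻¹ + k * (y - d)⁻¹)) y) :
    HasDerivAt (DD2 m a k d G) (DD3 m a k d G y) y := by
  unfold DD2 DD3
  have hsum := (inv_hasDeriv y hy).add ((inv_sub_hasDeriv d y hyd).const_mul k)
  have hQ := (((inv_hasDeriv y hy).pow 2).neg).sub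
      (((inv_sub_hasDeriv d y hyd).pow 2).const_mul k)
  have h := (((hsum.pow 2).const_mul (a ^ 2)).add ((hG.const_mul a).mul hQ)).const_mul
      (1 / m ^ 2)
  refine h.congr_deriv ?_
  simp only [Pi.add_apply, Pi.sub_apply, Pi.neg_apply, Pi.pow_apply, Pi.mul_apply]
  ring

private lemma step4 (m a k d : ℝ) (G : ℝ → ℝ) (y : ℝ) (hy : y ≠ 0) (hyd : y - d ≠ 0)
    (hG : HasDerivAt G (a * (y⁻¹ + k * (y - d)⁻¹)) y) :
    HasDerivAt (DD3 m a k d G) (DD4 m a k d G y) y := by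
  unfold DD3 DD4
  have hsum := (inv_hasDeriv y hy).add ((inv_sub_hasDeriv d y hyd).const_mul k)
  have hQ := (((inv_hasDeriv y hy).pow 2).neg).sub
      (((inv_sub_hasDeriv d y hyd).pow 2).const_mul k)
  have hR := (((inv_hasDeriv y hy).pow 3).const_mul 2).add
      (((inv_sub_hasDeriv d y hyd).pow 3).const_mul (2 * k))
  have h := (((hsum.const_mul (3 * a ^ 2)).mul hQ).add
      ((hG.const_mul a).mul hR)).const_mul (1 / m ^ 2)
  refine h.congr_deriv ?_
  simp only [Pi.add_apply, Pi.sub_apply, Pi.neg_apply, Pi.pow_apply, Pi.mul_apply]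
  ring

/-- The fourth derivative of the effective potential at `ȳ` satisfies
`(1/6) V⁗(ȳ) = (q μ₀/(2π m²)) I₀² ((1+k)⁴/(d⁴ k²)) [ (q μ₀/(4π))(1+k)² − p_z (1+k³)/(k I₀) ]`. -/
theorem fourth_deriv_V_at_ybar
    (μ₀ d I₀ k m q p_z : ℝ) (hμ : 0 < μ₀) (hd : 0 < d) (hI : I₀ ≠ 0)
    (hk : k ≠ 0) (hk1 : k ≠ -1) (hm : 0 < m)
    (A₀ Atilde V : ℝ → ℝ)
    (hA : ∀ y : ℝ,
      A₀ y = -(μ₀ / (2 * π)) * (I₀ * Real.log |y| + k * I₀ * Real.log |y - d|))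
    (ybar : ℝ) (hybar : ybar = d / (1 + k))
    (hAtilde : ∀ y : ℝ, Atilde y = A₀ y - A₀ ybar)
    (hV : ∀ y : ℝ, V y = (1 / (2 * m ^ 2)) * (p_z - q * Atilde y) ^ 2) :
    (1 / 6) * iteratedDeriv 4 V ybar
      = (q * μ₀ / (2 * π * m ^ 2)) * I₀ ^ 2 * ((1 + k) ^ 4 / (d ^ 4 * k ^ 2))
        * ((q * μ₀ / (4 * π)) * (1 + k) ^ 2 - p_z * (1 + k ^ 3) / (k * I₀)) := by
  have hd' : d ≠ 0 := ne_of_gt hd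
  have hm' : m ≠ 0 := ne_of_gt hm
  have hk1' : 1 + k ≠ 0 := fun h => hk1 (by linarith)
  have hy0 : ybar ≠ 0 := by rw [hybar]; exact div_ne_zero hd' hk1'
  have hsub : ybar - d = -(d * k) / (1 + k) := by
    rw [hybar]; field_simp; ring
  have hyd0 : ybar - d ≠ 0 := by
    rw [hsub]
    exact div_ne_zero (neg_ne_zero.mpr (mul_ne_zero hd' hk)) hk1'
  set a : ℝ := q * (μ₀ / (2 * π)) * I₀ with ha
  set B : ℝ := A₀ ybar with hB
  set G : ℝ → ℝ := fun x =>
    p_z - q * (-(μ₀ / (2 * π)) * (I₀ * Real.log x + k * I₀ * Real.log (x - d)) - B) with hGdef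
  have hVfun : V = fun x => (1 / (2 * m ^ 2)) * G x ^ 2 := by
    funext x
    rw [hV, hAtilde, hA, hGdef]
    simp [Real.log_abs]
  have hGd : ∀ y : ℝ, y ≠ 0 → y - d ≠ 0 →
      HasDerivAt G (a * (y⁻¹ + k * (y - d)⁻¹)) y := by
    intro y hy hyd
    rw [hGdef, ha]
    exact G_hasDeriv μ₀ d I₀ k q p_z B y hy hyd
  have hGybar : G ybar = p_z := by
    have hAy : A₀ ybar = -(μ₀ / (2 * π)) * (I₀ * Real.log ybar + k * I₀ * Real.log (ybar - d)) := by
      rw [hA]; simp [Real.log_abs]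
    show p_z - q * (-(μ₀ / (2 * π)) * (I₀ * Real.log ybar + k * I₀ * Real.log (ybar - d)) - B) = p_z
    rw [hB, hAy]
    ring
  have hnhd : ∀ᶠ y in 𝓝 ybar, y ≠ 0 ∧ y - d ≠ 0 := by
    filter_upwards [eventually_ne_nhds hy0,
      (eventually_ne_nhds (show ybar ≠ d from fun h => hyd0 (by rw [h]; ring)))] with y h1 h2
    exact ⟨h1, sub_ne_zero.mpr h2⟩
  have e1 : deriv V =ᶠ[𝓝 ybar] DD1 m a k d G := by
    filter_upwards [hnhd] with y hy
    rw [hVfun]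
    exact (step1 m a k d G y (hGd y hy.1 hy.2)).deriv
  have e2 : deriv (deriv V) =ᶠ[𝓝 ybar] DD2 m a k d G := by
    refine e1.deriv.trans ?_
    filter_upwards [hnhd] with y hy
    exact (step2 m a k d G y hy.1 hy.2 (hGd y hy.1 hy.2)).deriv
  have e3 : deriv (deriv (deriv V)) =ᶠ[𝓝 ybar] DD3 m a k d G := by
    refine e2.deriv.trans ?_
    filter_upwards [hnhd] with y hy
    exact (step3 m a k d G y hy.1 hy.2 (hGd y hy.1 hy.2)).deriv
  have e4 : deriv (deriv (deriv (deriv V))) ybar = DD4 m a k d G ybar := by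
    refine e3.deriv.eq_of_nhds.trans ?_
    exact (step4 m a k d G ybar hy0 hyd0 (hGd ybar hy0 hyd0)).deriv
  have hiter : iteratedDeriv 4 V ybar = deriv (deriv (deriv (deriv V))) ybar := by
    rw [show (4 : ℕ) = 3 + 1 from rfl, iteratedDeriv_succ,
      show (3 : ℕ) = 2 + 1 from rfl, iteratedDeriv_succ,
      show (2 : ℕ) = 1 + 1 from rfl, iteratedDeriv_succ, iteratedDeriv_one]
  rw [hiter, e4]
  have hu : ybar⁻¹ = (1 + k) / d := by rw [hybar, inv_div]
  have hv : (ybar - d)⁻¹ = -((1 + k) / (d * k)) := by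
    rw [hsub, inv_div, div_neg]
  rw [DD4, hGybar, hu, hv, ha]
  field_simp
  ring
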